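/- Every finite irreducible (connected) sl2-crystal is isomorphic to B(l) ⊗ T_λ for some l ∈ ℕ and λ ∈ ℤ, where the isomorphism sends x^i y^{l−i} ⊗ t_λ to f̃^i c₀ for c₀ the highest weight element. -/

import Mathlib

/-- `x^i y^j` is represented as `(i, j) : ℕ × ℕ`, an element of the sl2-crystal `B(i+j)`. -/
def et (p : ℕ × ℕ) : Option (ℕ × ℕ) := if p.1 = 0 then none else some (p.1 - 1, p.2 + 1)
def ft (p : ℕ × ℕ) : Option (ℕ × ℕ) := if p.2 = 0 then none else some (p.1 + 1, p.2 - 1)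
def eps (p : ℕ × ℕ) : ℤ := p.1
def phi (p : ℕ × ℕ) : ℤ := p.2
def wt (p : ℕ × ℕ) : ℤ := (p.2 : ℤ) - (p.1 : ℤ)

/-- Kashiwara tensor product rule for `ẽ` on a pair of elements. -/
def etT (b : (ℕ × ℕ) × (ℕ × ℕ)) : Option ((ℕ × ℕ) × (ℕ × ℕ)) :=
  if eps b.2 ≤ phi b.1 then (et b.1).map (fun a => (a, b.2)) else (et b.2).map (fun a => (b.1, a))

/-- Kashiwara tensor product rule for `f̃` on a pair of elements. -/
def ftT (b : (ℕ × ℕ) × (ℕ × ℕ)) : Option ((ℕ × ℕ) × (ℕ × ℕ)) :=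
  if eps b.2 < phi b.1 then (ft b.1).map (fun a => (a, b.2)) else (ft b.2).map (fun a => (b.1, a))

def epsT (b : (ℕ × ℕ) × (ℕ × ℕ)) : ℤ := max (eps b.1) (eps b.2 - wt b.1)
def phiT (b : (ℕ × ℕ) × (ℕ × ℕ)) : ℤ := max (phi b.1 + wt b.2) (phi b.2)
def wtT (b : (ℕ × ℕ) × (ℕ × ℕ)) : ℤ := wt b.1 + wt b.2

/-- Iterated application of a pointed (partial) operator. -/
def iterOp {α : Type} (g : α → Option α) : ℕ → α → Option α
  | 0, a => some a
  | n + 1, a => (g a).bind (iterOp g n)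

/-- The underlying set of the sl2-crystal `B(n)`: monomials `x^i y^j` with `i + j = n`. -/
def Bel (n : ℕ) : Type := {p : ℕ × ℕ // p.1 + p.2 = n}

def etB {n : ℕ} (b : Bel n) : Option (Bel n) :=
  if h : b.val.1 = 0 then none
  else some ⟨(b.val.1 - 1, b.val.2 + 1), by have := b.2; omega⟩

def ftB {n : ℕ} (b : Bel n) : Option (Bel n) :=
  if h : b.val.2 = 0 then none
  else some ⟨(b.val.1 + 1, b.val.2 - 1), by have := b.2; omega⟩

/-- An sl2-crystal structure, with `ε, φ` valued in `ℤ ∪ {−∞}`. -/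
structure SL2CrW (A : Type) where
  e : A → Option A
  f : A → Option A
  ε : A → WithBot ℤ
  φ : A → WithBot ℤ
  w : A → ℤ

/-- The axioms of an (abstract) sl2-crystal on the set of nonzero elements `A`. -/
structure IsCrystal {A : Type} (C : SL2CrW A) : Prop where
  phi_eq : ∀ a, C.φ a = (C.w a : WithBot ℤ) + C.ε a
  wt_e : ∀ a b, C.e a = some b → C.w b = C.w a + 2
  eps_e : ∀ a b, C.e a = some b → C.ε a = C.ε b + 1
  phi_e : ∀ a b, C.e a = some b → C.φ b = C.φ a + 1
  wt_f : ∀ a b, C.f a = some b → C.w b = C.w a - 2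
  eps_f : ∀ a b, C.f a = some b → C.ε b = C.ε a + 1
  phi_f : ∀ a b, C.f a = some b → C.φ a = C.φ b + 1
  ef : ∀ a b, C.f a = some b ↔ C.e b = some a
  bot : ∀ a, C.φ a = ⊥ → C.e a = none ∧ C.f a = none

/-- Kashiwara tensor product of sl2 crystals. -/
noncomputable def tensorW {A B : Type} (C : SL2CrW A) (D : SL2CrW B) : SL2CrW (A × B) where
  e p := if D.ε p.2 ≤ C.φ p.1 then (C.e p.1).map (fun a => (a, p.2))
         else (D.e p.2).map (fun a => (p.1, a))
  f p := if D.ε p.2 < C.φ p.1 then (C.f p.1).map (fun a => (a, p.2))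
         else (D.f p.2).map (fun a => (p.1, a))
  ε p := max (C.ε p.1) (D.ε p.2 + ((-(C.w p.1) : ℤ) : WithBot ℤ))
  φ p := max (C.φ p.1 + ((D.w p.2 : ℤ) : WithBot ℤ)) (D.φ p.2)
  w p := C.w p.1 + D.w p.2

/-- The singleton crystal `T_λ` with `wt(t_λ) = λ` and `ε = φ = −∞`. -/
def Tcr (lam : ℤ) : SL2CrW PUnit :=
  ⟨fun _ => none, fun _ => none, fun _ => ⊥, fun _ => ⊥, fun _ => lam⟩

/-- The standard crystal structure on `B(l)`. -/
def BelCrW (l : ℕ) : SL2CrW (Bel l) where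
  e := etB
  f := ftB
  ε b := ((b.val.1 : ℤ) : WithBot ℤ)
  φ b := ((b.val.2 : ℤ) : WithBot ℤ)
  w b := (b.val.2 : ℤ) - (b.val.1 : ℤ)

/-- The crystal `B(l) ⊗ T_λ`. -/
noncomputable def BT (l : ℕ) (lam : ℤ) : SL2CrW (Bel l × PUnit) := tensorW (BelCrW l) (Tcr lam)

/-- Every finite irreducible (connected) sl2-crystal (with `ε` and `φ`
counting the number of applications of `ẽ` resp. `f̃`, as for crystals of integrable
modules) is isomorphic to `B(l) ⊗ T_λ` for some `l ∈ ℕ`, `λ ∈ ℤ`, via an isomorphism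
sending the monomials to the f-chain from the highest weight element. -/

lemma iterOp_one {α : Type} (g : α → Option α) (a : α) : iterOp g 1 a = g a := by
  cases h : g a <;> simp [iterOp, h]

lemma iterOp_succ' {α : Type} (g : α → Option α) (n : ℕ) (a : α) :
    iterOp g (n + 1) a = (iterOp g n a).bind g := by
  induction n generalizing a with
  | zero => cases h : g a <;> simp [iterOp, h]
  | succ n ih =>
    show (g a).bind (iterOp g (n + 1)) = ((g a).bind (iterOp g n)).bind g
    cases h : g a with
    | none => rfl
    | some a' => exact ih a' 

/-- **Statement 3 proof.** -/
theorem stmt3 {A : Type} [Finite A] [Nonempty A] (C : SL2CrW A) (hC : IsCrystal C)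
    (hNe : ∀ (a : A) (n : ℕ), iterOp C.e n a = none ↔ C.ε a < (n : ℤ))
    (hNf : ∀ (a : A) (n : ℕ), iterOp C.f n a = none ↔ C.φ a < (n : ℤ))
    (hconn : ∀ a b : A,
      Relation.ReflTransGen (fun u v => C.f u = some v ∨ C.f v = some u) a b) :
    ∃ (l : ℕ) (lam : ℤ) (e : A ≃ (Bel l × PUnit)) (c0 : A),
      (∀ a, Option.map e (C.e a) = (BT l lam).e (e a)) ∧
      (∀ a, Option.map e (C.f a) = (BT l lam).f (e a)) ∧
      (∀ a, C.ε a = (BT l lam).ε (e a)) ∧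
      (∀ a, C.φ a = (BT l lam).φ (e a)) ∧
      (∀ a, C.w a = (BT l lam).w (e a)) ∧
      C.e c0 = none ∧
      (∀ b : Bel l, iterOp C.f b.val.1 c0 = some (e.symm (b, PUnit.unit))) := by
  classical
  -- ε and φ take nonnegative natural values
  have hεex : ∀ a : A, ∃ n : ℕ, C.ε a = ((n : ℤ) : WithBot ℤ) := by
    intro a
    have h0 : ¬ C.ε a < (((0 : ℕ) : ℤ) : WithBot ℤ) := by
      rw [← hNe a 0]; simp [iterOp]
    have hb : C.ε a ≠ ⊥ := by
      intro h
      exact h0 (h ▸ WithBot.bot_lt_coe _)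
    obtain ⟨z, hz⟩ := WithBot.ne_bot_iff_exists.mp hb
    have h1 : (((0:ℕ):ℤ) : WithBot ℤ) ≤ C.ε a := not_lt.mp h0
    rw [← hz] at h1
    have hz0 : (0:ℤ) ≤ z := by exact_mod_cast h1
    refine ⟨z.toNat, ?_⟩
    rw [← hz]
    have h2 : ((z.toNat : ℤ)) = z := Int.toNat_of_nonneg hz0
    exact_mod_cast h2.symm
  have hφex : ∀ a : A, ∃ n : ℕ, C.φ a = ((n : ℤ) : WithBot ℤ) := by
    intro a
    have h0 : ¬ C.φ a < (((0 : ℕ) : ℤ) : WithBot ℤ) := by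
      rw [← hNf a 0]; simp [iterOp]
    have hb : C.φ a ≠ ⊥ := by
      intro h
      exact h0 (h ▸ WithBot.bot_lt_coe _)
    obtain ⟨z, hz⟩ := WithBot.ne_bot_iff_exists.mp hb
    have h1 : (((0:ℕ):ℤ) : WithBot ℤ) ≤ C.φ a := not_lt.mp h0
    rw [← hz] at h1
    have hz0 : (0:ℤ) ≤ z := by exact_mod_cast h1
    refine ⟨z.toNat, ?_⟩
    rw [← hz]
    have h2 : ((z.toNat : ℤ)) = z := Int.toNat_of_nonneg hz0
    exact_mod_cast h2.symm
  choose εn hεn using hεex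
  choose φn hφn using hφex
  -- basic characterizations
  have he_none : ∀ a : A, (C.e a = none ↔ εn a = 0) := by
    intro a
    have h := hNe a 1
    rw [iterOp_one] at h
    rw [h, hεn a]
    constructor
    · intro hh
      have : (εn a : ℤ) < ((1:ℕ):ℤ) := by exact_mod_cast hh
      omega
    · intro hh
      have : (εn a : ℤ) < ((1:ℕ):ℤ) := by omega
      exact_mod_cast this
  have hf_none : ∀ a : A, (C.f a = none ↔ φn a = 0) := by
    intro a
    have h := hNf a 1
    rw [iterOp_one] at h
    rw [h, hφn a]
    constructor
    · intro hh
      have : (φn a : ℤ) < ((1:ℕ):ℤ) := by exact_mod_cast hh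
      omega
    · intro hh
      have : (φn a : ℤ) < ((1:ℕ):ℤ) := by omega
      exact_mod_cast this
  have hf_some : ∀ a : A, φn a ≠ 0 → ∃ b, C.f a = some b := by
    intro a h
    rcases hb : C.f a with _ | b
    · exact absurd ((hf_none a).mp hb) h
    · exact ⟨b, rfl⟩
  have hεf : ∀ a b : A, C.f a = some b → εn b = εn a + 1 := by
    intro a b h
    have h2 := hC.eps_f a b h
    rw [hεn, hεn] at h2
    have h3 : (εn b : ℤ) = (εn a : ℤ) + 1 := by exact_mod_cast h2
    omega
  have hφf : ∀ a b : A, C.f a = some b → φn a = φn b + 1 := by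
    intro a b h
    have h2 := hC.phi_f a b h
    rw [hφn, hφn] at h2
    have h3 : (φn a : ℤ) = (φn b : ℤ) + 1 := by exact_mod_cast h2
    omega
  have hεe : ∀ a b : A, C.e a = some b → εn a = εn b + 1 := by
    intro a b h
    have h2 := hC.eps_e a b h
    rw [hεn, hεn] at h2
    have h3 : (εn a : ℤ) = (εn b : ℤ) + 1 := by exact_mod_cast h2
    omega
  have hw : ∀ a : A, C.w a = (φn a : ℤ) - (εn a : ℤ) := by
    intro a
    have h2 := hC.phi_eq a
    rw [hεn, hφn] at h2
    have h3 : (φn a : ℤ) = C.w a + (εn a : ℤ) := by exact_mod_cast h2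
    omega
  -- find the highest-weight element c0
  obtain ⟨a0⟩ := (inferInstance : Nonempty A)
  have h1 : iterOp C.e (εn a0) a0 ≠ none := by
    intro h
    rw [hNe, hεn] at h
    exact lt_irrefl _ h
  obtain ⟨c0, hc0⟩ : ∃ c, iterOp C.e (εn a0) a0 = some c := by
    rcases hb : iterOp C.e (εn a0) a0 with _ | c
    · exact absurd hb h1
    · exact ⟨c, rfl⟩
  have key : ∀ (n : ℕ) (a b : A), iterOp C.e n a = some b → εn a = εn b + n := by
    intro n
    induction n with
    | zero => intro a b h; simp [iterOp] at h; simp [h]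
    | succ n ih =>
      intro a b h
      rw [show iterOp C.e (n+1) a = (C.e a).bind (iterOp C.e n) from rfl] at h
      rcases he : C.e a with _ | a'
      · rw [he] at h; simp at h
      · rw [he] at h; simp at h
        have h1 := ih a' b h
        have h2 := hεe a a' he
        omega
  have hεc0 : εn c0 = 0 := by
    have := key (εn a0) a0 c0 hc0
    omega
  have hec0 : C.e c0 = none := (he_none c0).mpr hεc0
  set l := φn c0 with hl
  -- the chain of elements f̃^i c0
  set f' : A → A := fun a => (C.f a).getD a with hf'
  set ch : ℕ → A := fun i => f'^[i] c0 with hch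
  have hch0 : ch 0 = c0 := rfl
  have hinv : ∀ i, i ≤ l → εn (ch i) = i ∧ φn (ch i) = l - i := by
    intro i
    induction i with
    | zero => intro _; exact ⟨hεc0, rfl⟩
    | succ i ih =>
      intro hi
      obtain ⟨hε, hφ⟩ := ih (Nat.le_of_succ_le hi)
      have hφne : φn (ch i) ≠ 0 := by omega
      obtain ⟨b, hb⟩ := hf_some _ hφne
      have hchs : ch (i+1) = b := by
        show f'^[i+1] c0 = b
        rw [Function.iterate_succ_apply']
        show (C.f (ch i)).getD (ch i) = b
        rw [hb]
        rfl
      rw [hchs]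
      have h1 := hεf _ _ hb
      have h2 := hφf _ _ hb
      omega
  have hstep : ∀ i, i < l → C.f (ch i) = some (ch (i+1)) := by
    intro i hi
    obtain ⟨hε, hφ⟩ := hinv i hi.le
    have hφne : φn (ch i) ≠ 0 := by omega
    obtain ⟨b, hb⟩ := hf_some _ hφne
    have hchs : ch (i+1) = b := by
      show f'^[i+1] c0 = b
      rw [Function.iterate_succ_apply']
      show (C.f (ch i)).getD (ch i) = b
      rw [hb]
      rfl
    rw [hchs]; exact hb
  have hflast : C.f (ch l) = none := by
    apply (hf_none _).mpr
    have := (hinv l le_rfl).2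
    omega
  have hestep : ∀ i, i < l → C.e (ch (i+1)) = some (ch i) := fun i hi =>
    (hC.ef _ _).mp (hstep i hi)
  -- surjectivity of the chain
  have hsurj : ∀ a : A, ∃ i, i ≤ l ∧ ch i = a := by
    intro a
    induction hconn c0 a with
    | refl => exact ⟨0, Nat.zero_le _, rfl⟩
    | tail _ huv ih =>
      obtain ⟨i, hil, rfl⟩ := ih
      rcases huv with h | h
      · have hil' : i < l := by
          rcases eq_or_lt_of_le hil with rfl | h' 
          · rw [hflast] at h; cases h
          · exact h'
        rw [hstep i hil'] at h
        exact ⟨i+1, hil', (Option.some_inj.mp h).symm ▸ rfl⟩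
      · have he := (hC.ef _ _).mp h
        cases i with
        | zero => rw [hch0, hec0] at he; cases he
        | succ j =>
          rw [hestep j (by omega)] at he
          exact ⟨j, by omega, Option.some_inj.mp he⟩
  have hidx : ∀ a : A, εn a ≤ l ∧ ch (εn a) = a := by
    intro a
    obtain ⟨i, hil, rfl⟩ := hsurj a
    rw [(hinv i hil).1]
    exact ⟨hil, rfl⟩
  -- the explicit bijection
  refine ⟨l, 0, ⟨fun a => (⟨(εn a, l - εn a), by have := (hidx a).1; omega⟩, PUnit.unit),
      fun p => ch p.1.val.1, fun a => (hidx a).2, ?_⟩, c0, ?_, ?_, ?_, ?_, ?_, hec0, ?_⟩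
  · rintro ⟨⟨⟨i, j⟩, hij⟩, ⟨⟩⟩
    have hil : i ≤ l := by omega
    have hi : εn (ch i) = i := (hinv i hil).1
    simp only
    refine Prod.ext ?_ rfl
    apply Subtype.ext
    simp only [hi]
    exact Prod.ext rfl (by omega)
  · -- e intertwines
    intro a
    obtain ⟨i, hil, rfl⟩ := hsurj a
    have hεi : εn (ch i) = i := (hinv i hil).1
    simp only [Equiv.coe_fn_mk, BT, tensorW, Tcr, BelCrW, etB, hεi]
    cases i with
    | zero =>
      have hz : C.e (ch 0) = none := hec0
      rw [hz]
      simp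
    | succ j =>
      rw [hestep j (by omega)]
      have hεj : εn (ch j) = j := (hinv j (by omega)).1
      simp only [Option.map_some, hεj]
      rw [if_pos bot_le]
      rw [dif_neg (by omega : ¬ (j + 1 = 0))]
      refine congrArg some (Prod.ext ?_ rfl)
      apply Subtype.ext
      exact Prod.ext rfl (by simp; omega)
  · -- f intertwines
    intro a
    obtain ⟨i, hil, rfl⟩ := hsurj a
    have hεi : εn (ch i) = i := (hinv i hil).1
    simp only [Equiv.coe_fn_mk, BT, tensorW, Tcr, BelCrW, ftB, hεi]
    rcases eq_or_lt_of_le hil with rfl | hil'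
    · rw [hflast]
      rw [if_pos (WithBot.bot_lt_coe _)]
      rw [dif_pos (by omega : l - l = 0)]
      simp
    · rw [hstep i hil']
      have hεs : εn (ch (i+1)) = i + 1 := (hinv (i+1) hil').1
      simp only [Option.map_some, hεs]
      rw [if_pos (WithBot.bot_lt_coe _)]
      rw [dif_neg (by omega : ¬ (l - i = 0))]
      refine congrArg some (Prod.ext ?_ rfl)
      apply Subtype.ext
      exact Prod.ext (by simp) (by simp; omega)
  · -- ε matches
    intro a
    obtain ⟨i, hil, rfl⟩ := hsurj a
    have hεi : εn (ch i) = i := (hinv i hil).1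
    rw [hεn (ch i), hεi]
    simp only [Equiv.coe_fn_mk, BT, tensorW, Tcr, BelCrW, hεi]
    rw [WithBot.bot_add, max_eq_left bot_le]
  · -- φ matches
    intro a
    obtain ⟨i, hil, rfl⟩ := hsurj a
    have hεi : εn (ch i) = i := (hinv i hil).1
    have hφi : φn (ch i) = l - i := (hinv i hil).2
    rw [hφn (ch i), hφi]
    simp only [Equiv.coe_fn_mk, BT, tensorW, Tcr, BelCrW, hεi]
    rw [max_eq_left (by exact bot_le)]
    rw [show ((0:ℤ) : WithBot ℤ) = 0 from rfl, add_zero]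
  · -- w matches
    intro a
    obtain ⟨i, hil, rfl⟩ := hsurj a
    have hεi : εn (ch i) = i := (hinv i hil).1
    have hφi : φn (ch i) = l - i := (hinv i hil).2
    rw [hw (ch i), hεi, hφi]
    simp only [Equiv.coe_fn_mk, BT, tensorW, Tcr, BelCrW, hεi]
    push_cast [Nat.cast_sub hil]
    ring
  · -- the chain description
    have hiter : ∀ i, i ≤ l → iterOp C.f i c0 = some (ch i) := by
      intro i
      induction i with
      | zero => intro _; rfl
      | succ i ih =>
        intro hi
        rw [iterOp_succ', ih (Nat.le_of_succ_le hi)]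
        simpa using hstep i hi
    rintro ⟨⟨i, j⟩, hij⟩
    simp only [Equiv.coe_fn_symm_mk]
    exact hiter i (by omega)
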